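/- Let δ, p, q, α be real numbers with 0<δ<1, 2≤p<q and q<α+1, let X>0, Y≥0, A>0 be reals, and define σ:(0,∞)→ℝ by σ(t)=X·t^{p−1−α}+Y·t^{q−1−α}−A·t^{−α−δ}. Then σ(t)→−∞ as t→0⁺ and σ(t)→0 as t→+∞. Moreover, if t_max>0 denotes the unique critical point of σ (the unique t with (α+1−p)·X·t^{p−1+δ}+(α+1−q)·Y·t^{q−1+δ}=(α+δ)·A), then σ(t)>0 for every t≥t_max; in particular σ(t_max)=sup_{t>0}σ(t)>0, and σ(t)>0 for all sufficiently large t. -/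

import Mathlib

open Filter Set

/-- the fibering function
`σ(t) = X·t^{p−1−α} + Y·t^{q−1−α} − A·t^{−α−δ}` tends to `−∞` as `t → 0⁺` and
to `0` as `t → +∞`; moreover, if `t_max > 0` is the unique critical point of
`σ` (i.e. `(α+1−p)·X·t_max^{p−1+δ} + (α+1−q)·Y·t_max^{q−1+δ} = (α+δ)·A`),
then `σ(t) > 0` for every `t ≥ t_max`; in particular `σ(t_max)` is the
supremum of `σ` over `(0,∞)`, it is positive, and `σ(t) > 0` for all
sufficiently large `t`. -/
theorem statement2
    (δ p q α X Y A : ℝ)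
    (hδ0 : 0 < δ) (hδ1 : δ < 1)
    (hp : 2 ≤ p) (hpq : p < q) (hq : q < α + 1)
    (hX : 0 < X) (hY : 0 ≤ Y) (hA : 0 < A)
    (σ : ℝ → ℝ)
    (hσ : ∀ t : ℝ, σ t = X * t ^ (p - 1 - α) + Y * t ^ (q - 1 - α)
        - A * t ^ (-α - δ)) :
    Tendsto σ (nhdsWithin 0 (Set.Ioi (0 : ℝ))) atBot ∧
    Tendsto σ atTop (nhds 0) ∧
    (∀ tmax : ℝ, 0 < tmax →
      (α + 1 - p) * X * tmax ^ (p - 1 + δ)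
        + (α + 1 - q) * Y * tmax ^ (q - 1 + δ) = (α + δ) * A →
      (∀ t : ℝ, tmax ≤ t → 0 < σ t) ∧
      (0 < σ tmax ∧ ∀ t : ℝ, 0 < t → σ t ≤ σ tmax) ∧
      (∀ᶠ t : ℝ in atTop, 0 < σ t)) := by
  have hfn : σ = fun t : ℝ => X * t ^ (p - 1 - α) + Y * t ^ (q - 1 - α)
      - A * t ^ (-α - δ) := funext hσ
  subst hfn
  have hα : 1 < α := by linarith
  have hαδ : 0 < α + δ := by linarith
  have ha : 0 < p - 1 + δ := by linarith
  have hb : 0 < q - 1 + δ := by linarith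
  have hαp : 0 < α + 1 - p := by linarith
  have hαq : 0 < α + 1 - q := by linarith
  -- factorization: for t > 0,
  -- σ t = t^(-α-δ) * (X * t^(p-1+δ) + Y * t^(q-1+δ) - A)
  have hfact : ∀ t : ℝ, 0 < t →
      X * t ^ (p - 1 - α) + Y * t ^ (q - 1 - α) - A * t ^ (-α - δ)
      = t ^ (-α - δ) * (X * t ^ (p - 1 + δ) + Y * t ^ (q - 1 + δ) - A) := by
    intro t ht
    have h1 : t ^ (p - 1 - α) = t ^ (-α - δ) * t ^ (p - 1 + δ) := by
      rw [← Real.rpow_add ht]; ring_nf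
    have h2 : t ^ (q - 1 - α) = t ^ (-α - δ) * t ^ (q - 1 + δ) := by
      rw [← Real.rpow_add ht]; ring_nf
    rw [h1, h2]; ring
  -- limit at 0⁺
  have hlim0 : Tendsto (fun t : ℝ => X * t ^ (p - 1 - α) + Y * t ^ (q - 1 - α)
      - A * t ^ (-α - δ)) (nhdsWithin 0 (Set.Ioi (0 : ℝ))) atBot := by
    have hmain : Tendsto (fun t : ℝ =>
        t ^ (-α - δ) * (X * t ^ (p - 1 + δ) + Y * t ^ (q - 1 + δ) - A))
        (nhdsWithin 0 (Set.Ioi (0 : ℝ))) atBot := by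
      have hpow : Tendsto (fun t : ℝ => t ^ (-α - δ))
          (nhdsWithin 0 (Set.Ioi (0 : ℝ))) atTop := by
        have := (tendsto_rpow_atTop hαδ).comp (tendsto_inv_nhdsGT_zero (𝕜 := ℝ))
        refine this.congr' ?_
        filter_upwards [self_mem_nhdsWithin] with t (ht : t ∈ Set.Ioi (0:ℝ))
        simp only [Function.comp]
        rw [Real.inv_rpow ht.le, ← Real.rpow_neg ht.le,
          show -(α + δ) = -α - δ by ring]
      have hbr : Tendsto (fun t : ℝ =>
          X * t ^ (p - 1 + δ) + Y * t ^ (q - 1 + δ) - A)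
          (nhdsWithin 0 (Set.Ioi (0 : ℝ))) (nhds (-A)) := by
        have h1 : Tendsto (fun t : ℝ => t ^ (p - 1 + δ)) (nhds 0) (nhds 0) := by
          have := (Real.continuousAt_rpow_const 0 (p - 1 + δ) (Or.inr ha.le))
          simpa [Real.zero_rpow ha.ne'] using this.tendsto
        have h2 : Tendsto (fun t : ℝ => t ^ (q - 1 + δ)) (nhds 0) (nhds 0) := by
          have := (Real.continuousAt_rpow_const 0 (q - 1 + δ) (Or.inr hb.le))
          simpa [Real.zero_rpow hb.ne'] using this.tendsto
        have := (((h1.const_mul X).add (h2.const_mul Y)).sub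
          (tendsto_const_nhds (x := A))).mono_left
          (nhdsWithin_le_nhds (s := Set.Ioi (0:ℝ)))
        simpa using this
      exact hpow.atTop_mul_neg (by linarith) hbr
    refine hmain.congr' ?_
    filter_upwards [self_mem_nhdsWithin] with t (ht : t ∈ Set.Ioi (0:ℝ))
    exact (hfact t ht).symm
  -- limit at +∞
  have hlimtop : Tendsto (fun t : ℝ => X * t ^ (p - 1 - α) + Y * t ^ (q - 1 - α)
      - A * t ^ (-α - δ)) atTop (nhds 0) := by
    have h1 : Tendsto (fun t : ℝ => t ^ (p - 1 - α)) atTop (nhds 0) := by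
      rw [show p - 1 - α = -(α + 1 - p) by ring]
      exact tendsto_rpow_neg_atTop hαp
    have h2 : Tendsto (fun t : ℝ => t ^ (q - 1 - α)) atTop (nhds 0) := by
      rw [show q - 1 - α = -(α + 1 - q) by ring]
      exact tendsto_rpow_neg_atTop hαq
    have h3 : Tendsto (fun t : ℝ => t ^ (-α - δ)) atTop (nhds 0) := by
      rw [show -α - δ = -(α + δ) by ring]
      exact tendsto_rpow_neg_atTop hαδ
    have := ((h1.const_mul X).add (h2.const_mul Y)).sub (h3.const_mul A)
    simpa using this
  refine ⟨hlim0, hlimtop, ?_⟩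
  intro T hT hcrit
  -- derivative of σ
  have hderiv : ∀ t : ℝ, 0 < t → HasDerivAt
      (fun t : ℝ => X * t ^ (p - 1 - α) + Y * t ^ (q - 1 - α) - A * t ^ (-α - δ))
      (t ^ (-α - δ - 1) * ((α + δ) * A
        - ((α + 1 - p) * X * t ^ (p - 1 + δ) + (α + 1 - q) * Y * t ^ (q - 1 + δ)))) t := by
    intro t ht
    have d1 := (Real.hasDerivAt_rpow_const (x := t) (p := p - 1 - α)
      (Or.inl ht.ne')).const_mul X
    have d2 := (Real.hasDerivAt_rpow_const (x := t) (p := q - 1 - α)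
      (Or.inl ht.ne')).const_mul Y
    have d3 := (Real.hasDerivAt_rpow_const (x := t) (p := -α - δ)
      (Or.inl ht.ne')).const_mul A
    have := (d1.add d2).sub d3
    refine this.congr_deriv ?_
    have e1 : t ^ (p - 1 - α - 1) = t ^ (-α - δ - 1) * t ^ (p - 1 + δ) := by
      rw [← Real.rpow_add ht]; ring_nf
    have e2 : t ^ (q - 1 - α - 1) = t ^ (-α - δ - 1) * t ^ (q - 1 + δ) := by
      rw [← Real.rpow_add ht]; ring_nf
    rw [e1, e2]; ring
  -- E is strictly monotone on [0, ∞)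
  have hEmono : ∀ s t : ℝ, 0 ≤ s → s < t →
      (α + 1 - p) * X * s ^ (p - 1 + δ) + (α + 1 - q) * Y * s ^ (q - 1 + δ)
      < (α + 1 - p) * X * t ^ (p - 1 + δ) + (α + 1 - q) * Y * t ^ (q - 1 + δ) := by
    intro s t hs hst
    have h1 : s ^ (p - 1 + δ) < t ^ (p - 1 + δ) := Real.rpow_lt_rpow hs hst ha
    have h2 : s ^ (q - 1 + δ) ≤ t ^ (q - 1 + δ) :=
      Real.rpow_le_rpow hs hst.le hb.le
    have hXp : 0 < (α + 1 - p) * X := mul_pos hαp hX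
    have hYq : 0 ≤ (α + 1 - q) * Y := mul_nonneg hαq.le hY
    nlinarith
  -- monotone increasing on (0, T]
  have hmonoIoc : StrictMonoOn
      (fun t : ℝ => X * t ^ (p - 1 - α) + Y * t ^ (q - 1 - α) - A * t ^ (-α - δ))
      (Set.Ioc 0 T) := by
    apply strictMonoOn_of_deriv_pos (convex_Ioc 0 T)
    · intro t ht
      exact ((hderiv t ht.1).continuousAt).continuousWithinAt
    · intro t ht
      rw [interior_Ioc] at ht
      rw [(hderiv t ht.1).deriv]
      have h1 : (0:ℝ) < t ^ (-α - δ - 1) := Real.rpow_pos_of_pos ht.1 _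
      have h2 := hEmono t T ht.1.le ht.2
      rw [hcrit] at h2
      exact mul_pos h1 (by linarith)
  -- monotone decreasing on [T, ∞)
  have hantiIci : StrictAntiOn
      (fun t : ℝ => X * t ^ (p - 1 - α) + Y * t ^ (q - 1 - α) - A * t ^ (-α - δ))
      (Set.Ici T) := by
    apply strictAntiOn_of_deriv_neg (convex_Ici T)
    · intro t ht
      exact ((hderiv t (lt_of_lt_of_le hT ht)).continuousAt).continuousWithinAt
    · intro t ht
      rw [interior_Ici] at ht
      have htpos : 0 < t := hT.trans ht
      rw [(hderiv t htpos).deriv]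
      have h1 : (0:ℝ) < t ^ (-α - δ - 1) := Real.rpow_pos_of_pos htpos _
      have h2 := hEmono T t hT.le ht
      rw [hcrit] at h2
      have : (α + δ) * A - ((α + 1 - p) * X * t ^ (p - 1 + δ)
          + (α + 1 - q) * Y * t ^ (q - 1 + δ)) < 0 := by linarith
      exact mul_neg_of_pos_of_neg h1 this
  -- A < X*T^a + Y*T^b
  have hAlt : A < X * T ^ (p - 1 + δ) + Y * T ^ (q - 1 + δ) := by
    have hTa : 0 < T ^ (p - 1 + δ) := Real.rpow_pos_of_pos hT _
    have hTb : 0 ≤ T ^ (q - 1 + δ) := (Real.rpow_pos_of_pos hT _).le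
    nlinarith [hcrit, mul_pos hX hTa, mul_nonneg hY hTb]
  -- positivity on [T, ∞)
  have hpos : ∀ t : ℝ, T ≤ t →
      0 < X * t ^ (p - 1 - α) + Y * t ^ (q - 1 - α) - A * t ^ (-α - δ) := by
    intro t hTt
    have ht : 0 < t := hT.trans_le hTt
    rw [hfact t ht]
    have h1 : T ^ (p - 1 + δ) ≤ t ^ (p - 1 + δ) :=
      Real.rpow_le_rpow hT.le hTt ha.le
    have h2 : T ^ (q - 1 + δ) ≤ t ^ (q - 1 + δ) :=
      Real.rpow_le_rpow hT.le hTt hb.le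
    have hbr : 0 < X * t ^ (p - 1 + δ) + Y * t ^ (q - 1 + δ) - A := by
      nlinarith
    exact mul_pos (Real.rpow_pos_of_pos ht _) hbr
  refine ⟨hpos, ⟨hpos T le_rfl, ?_⟩, ?_⟩
  · intro t ht
    rcases lt_trichotomy t T with h | h | h
    · exact le_of_lt (hmonoIoc ⟨ht, h.le⟩ ⟨hT, le_rfl⟩ h)
    · subst h; exact le_rfl
    · exact le_of_lt (hantiIci (Set.self_mem_Ici) (le_of_lt h) h)
  · filter_upwards [eventually_ge_atTop T] with t ht
    exact hpos t ht
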